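/- arXiv:1201.2130 — 2 statements merged into one kernel-verified Lean document; each statement's English description precedes it below -/
import Mathlib

section
/- Let W be a finite group acting on V, and suppose H ≤ W is a subgroup such that every element of H has a nonzero fixed vector in V (i.e., det(1−h on V) = 0 for all h ∈ H). Then any character induced from H to W lies in the radical of the elliptic pairing ⟨·,·⟩^el_W. -/
open scoped BigOperators

/-- The elliptic pairing on `ℂ`-valued functions on `W`, relative to the action of `W` on `V`
via `ρ`. -/
noncomputable def ellipticPairing (W : Type*) [Group W] [Fintype W]
    {V : Type*} [AddCommGroup V] [Module ℂ V] [FiniteDimensional ℂ V]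
    (ρ : Representation ℂ W V) (f g : W → ℂ) : ℂ :=
  (Fintype.card W : ℂ)⁻¹ * ∑ w : W, (starRingEnd ℂ) (f w) * g w *
    LinearMap.det (LinearMap.id - ρ w)

/-- The character of `W` induced from a function `χ` on a subgroup `H`, given by the usual
induced character formula `Ind χ(w) = (1/|H|) ∑_{x ∈ W, x⁻¹wx ∈ H} χ(x⁻¹wx)`. -/
noncomputable def inducedChar {W : Type*} [Group W] [Fintype W]
    (H : Subgroup W) [DecidablePred (· ∈ H)] (χ : W → ℂ) : W → ℂ :=
  fun w => (Nat.card H : ℂ)⁻¹ * ∑ x : W, if x⁻¹ * w * x ∈ H then χ (x⁻¹ * w * x) else 0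

/-- If every element of the subgroup `H ≤ W` has a nonzero fixed vector in `V`
(i.e. `det(1 - h) = 0` on `V` for all `h ∈ H`), then any character induced from `H`
lies in the radical of the elliptic pairing. -/
theorem inducedChar_mem_radical_of_no_elliptic_elements
    (W : Type*) [Group W] [Fintype W]
    (V : Type*) [AddCommGroup V] [Module ℂ V] [FiniteDimensional ℂ V]
    (ρ : Representation ℂ W V)
    (H : Subgroup W) [DecidablePred (· ∈ H)]
    (hH : ∀ h ∈ H, LinearMap.det (LinearMap.id - ρ h) = 0)
    (χ : W → ℂ) (μ : W → ℂ) :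
    ellipticPairing W ρ (inducedChar H χ) μ = 0 := by
  have key : ∀ w : W, LinearMap.det (LinearMap.id - ρ w) ≠ 0 → inducedChar H χ w = 0 := by
    intro w hw
    unfold inducedChar
    rw [Finset.sum_eq_zero, mul_zero]
    intro x _
    rw [if_neg]
    intro hx
    apply hw
    have hid : (LinearMap.id : V →ₗ[ℂ] V) = 1 := rfl
    rw [hid]
    have hconj : (1 : V →ₗ[ℂ] V) - ρ w = ρ x * (1 - ρ (x⁻¹ * w * x)) * ρ x⁻¹ := by
      simp only [mul_sub, sub_mul, mul_one, one_mul, ← map_mul]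
      congr 2
      · rw [mul_inv_cancel, map_one]
      · group
    rw [hconj, Module.End.mul_eq_comp, Module.End.mul_eq_comp, LinearMap.det_comp,
      LinearMap.det_comp, ← hid, hH _ hx, mul_zero, zero_mul]
  unfold ellipticPairing
  rw [Finset.sum_eq_zero, mul_zero]
  intro w _
  by_cases hd : LinearMap.det (LinearMap.id - ρ w) = 0
  · rw [hd, mul_zero]
  · rw [key w hd, map_zero, zero_mul, zero_mul]
end

section
/- The dimension of the quotient of the complexified representation ring of a finite group W (acting on V) by the radical of the elliptic pairing equals the number of elliptic conjugacy classes of W, i.e., conjugacy classes of elements w with det(1−w on V) ≠ 0. -/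
open scoped BigOperators

lemma aux_det_conj {W : Type*} [Group W] [Fintype W]
    {V : Type*} [AddCommGroup V] [Module ℂ V] [FiniteDimensional ℂ V]
    (ρ : Representation ℂ W V) (x w : W) :
    LinearMap.det (LinearMap.id - ρ (x * w * x⁻¹)) =
      LinearMap.det (LinearMap.id - ρ w) := by
  have h1 : (LinearMap.id : V →ₗ[ℂ] V) - ρ (x * w * x⁻¹)
      = ρ x * ((LinearMap.id - ρ w) * ρ x⁻¹) := by
    rw [← Module.End.one_eq_id, sub_mul, one_mul, mul_sub, ← map_mul,
      mul_inv_cancel, map_one, ← map_mul, ← map_mul, ← mul_assoc]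
  have h2 : LinearMap.det (ρ x) * LinearMap.det (ρ x⁻¹) = 1 := by
    rw [← map_mul, ← map_mul, mul_inv_cancel, map_one, map_one]
  rw [h1, map_mul, map_mul, mul_left_comm, h2, mul_one]

/-- The complexified representation ring of a finite group `W` is identified with the space
`CF` of class functions `W → ℂ`.  The dimension of its quotient by the radical of the
elliptic pairing equals the number of elliptic conjugacy classes of `W`, i.e. classes of
elements `w` with `det(1 - w on V) ≠ 0`. -/
theorem finrank_quotient_radical_ellipticPairing_eq_card_elliptic_classes
    (W : Type*) [Group W] [Fintype W]
    (V : Type*) [AddCommGroup V] [Module ℂ V] [FiniteDimensional ℂ V]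
    (ρ : Representation ℂ W V)
    (CF rad : Submodule ℂ (W → ℂ))
    (hCF : (CF : Set (W → ℂ)) = {f | ∀ x w : W, f (x * w * x⁻¹) = f w})
    (hrad : (rad : Set (W → ℂ)) =
      {f | (∀ x w : W, f (x * w * x⁻¹) = f w) ∧
        ∀ g ∈ CF, ellipticPairing W ρ f g = 0}) :
    Module.finrank ℂ (CF ⧸ (rad.comap CF.subtype)) =
      {c : ConjClasses W | ∃ w : W,
        ConjClasses.mk w = c ∧ LinearMap.det (LinearMap.id - ρ w) ≠ 0}.ncard := by
  classical
  set E : Set (ConjClasses W) := {c : ConjClasses W | ∃ w : W,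
      ConjClasses.mk w = c ∧ LinearMap.det (LinearMap.id - ρ w) ≠ 0} with hE
  have transport : ∀ (f : W → ℂ), (∀ x w : W, f (x * w * x⁻¹) = f w) →
      ∀ a b : W, ConjClasses.mk a = ConjClasses.mk b → f a = f b := by
    intro f hf a b hab
    obtain ⟨c, hc⟩ := isConj_iff.mp (ConjClasses.mk_eq_mk_iff_isConj.mp hab)
    rw [← hc, hf]
  have dtrans : ∀ a b : W, ConjClasses.mk a = ConjClasses.mk b →
      LinearMap.det (LinearMap.id - ρ a) = LinearMap.det (LinearMap.id - ρ b) := by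
    intro a b hab
    exact transport (fun w => LinearMap.det (LinearMap.id - ρ w))
      (fun x w => aux_det_conj ρ x w) a b hab
  have hEmem : ∀ c : E, ∃ w : W, ConjClasses.mk w = (c : ConjClasses W) ∧
      LinearMap.det (LinearMap.id - ρ w) ≠ 0 := fun c => c.2
  let rep : E → W := fun c => Classical.choose (hEmem c)
  have hrep : ∀ c : E, ConjClasses.mk (rep c) = (c : ConjClasses W) ∧
      LinearMap.det (LinearMap.id - ρ (rep c)) ≠ 0 := fun c => Classical.choose_spec (hEmem c)
  let φ : CF →ₗ[ℂ] (E → ℂ) :=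
    { toFun := fun f c => (f : W → ℂ) (rep c)
      map_add' := fun f g => rfl
      map_smul' := fun r f => rfl }
  have hφ : ∀ (f : CF) (c : E), φ f c = (f : W → ℂ) (rep c) := fun f c => rfl
  -- class functions in rad vanish on elliptic elements
  have vanish : ∀ f : W → ℂ, (∀ x w : W, f (x * w * x⁻¹) = f w) →
      (∀ g ∈ CF, ellipticPairing W ρ f g = 0) →
      ∀ w0 : W, LinearMap.det (LinearMap.id - ρ w0) ≠ 0 → f w0 = 0 := by
    intro f hf hpair w0 hw0
    set g : W → ℂ := fun y => if ConjClasses.mk y = ConjClasses.mk w0 then 1 else 0 with hg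
    have hgCF : g ∈ CF := by
      rw [← SetLike.mem_coe, hCF]
      intro x w
      have hmk : ConjClasses.mk (x * w * x⁻¹) = ConjClasses.mk w :=
        ConjClasses.mk_eq_mk_iff_isConj.mpr (isConj_iff.mpr ⟨x⁻¹, by group⟩)
      simp only [hg, hmk]
    have h0 := hpair g hgCF
    unfold ellipticPairing at h0
    have hcard : ((Fintype.card W : ℂ))⁻¹ ≠ 0 := by
      simp [Fintype.card_ne_zero]
    have hsum : ∑ w : W, (starRingEnd ℂ) (f w) * g w *
        LinearMap.det (LinearMap.id - ρ w) = 0 := by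
      rcases mul_eq_zero.mp h0 with h | h
      · exact absurd h hcard
      · exact h
    have key : ∑ w : W, (starRingEnd ℂ) (f w) * g w * LinearMap.det (LinearMap.id - ρ w)
        = (Finset.univ.filter fun w => ConjClasses.mk w = ConjClasses.mk w0).card •
            ((starRingEnd ℂ) (f w0) * LinearMap.det (LinearMap.id - ρ w0)) := by
      have hterm : ∀ w : W, (starRingEnd ℂ) (f w) * g w * LinearMap.det (LinearMap.id - ρ w) =
          if ConjClasses.mk w = ConjClasses.mk w0 then
            (starRingEnd ℂ) (f w0) * LinearMap.det (LinearMap.id - ρ w0) else 0 := by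
        intro w
        by_cases hw : ConjClasses.mk w = ConjClasses.mk w0
        · rw [if_pos hw]
          simp only [hg, if_pos hw]
          rw [transport f hf w w0 hw, dtrans w w0 hw]
          ring
        · rw [if_neg hw]
          simp only [hg, if_neg hw]
          ring
      rw [Finset.sum_congr rfl fun w _ => hterm w, Finset.sum_ite, Finset.sum_const,
        Finset.sum_const, smul_zero, add_zero]
    rw [key, nsmul_eq_mul] at hsum
    have hposcard :
        ((Finset.univ.filter fun w => ConjClasses.mk w = ConjClasses.mk w0).card : ℂ) ≠ 0 := by
      have : 0 < (Finset.univ.filter fun w => ConjClasses.mk w = ConjClasses.mk w0).card :=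
        Finset.card_pos.mpr ⟨w0, by simp⟩
      exact_mod_cast this.ne'
    rcases mul_eq_zero.mp hsum with h | h
    · exact absurd h hposcard
    · rcases mul_eq_zero.mp h with h' | h'
      · have := congrArg (starRingEnd ℂ) h'
        simpa using this
      · exact absurd h' hw0
  have hker : rad.comap CF.subtype = LinearMap.ker φ := by
    ext f
    constructor
    · intro hf
      have hf' : (f : W → ℂ) ∈ (rad : Set (W → ℂ)) := hf
      rw [hrad] at hf'
      obtain ⟨hcls, hp⟩ := hf'
      rw [LinearMap.mem_ker]
      funext c
      show (f : W → ℂ) (rep c) = 0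
      exact vanish _ hcls hp (rep c) (hrep c).2
    · intro hf
      have hf0 : ∀ c : E, (f : W → ℂ) (rep c) = 0 :=
        fun c => congrFun (LinearMap.mem_ker.mp hf) c
      have hcls : ∀ x w : W, (f : W → ℂ) (x * w * x⁻¹) = (f : W → ℂ) w := by
        have h2 : (f : W → ℂ) ∈ (CF : Set (W → ℂ)) := f.2
        rw [hCF] at h2
        exact h2
      show (f : W → ℂ) ∈ rad
      rw [← SetLike.mem_coe, hrad]
      refine ⟨hcls, fun g hg => ?_⟩
      unfold ellipticPairing
      rw [Finset.sum_eq_zero, mul_zero]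
      intro w _
      by_cases hdw : LinearMap.det (LinearMap.id - ρ w) = 0
      · rw [hdw, mul_zero]
      · have hmem : ConjClasses.mk w ∈ E := ⟨w, rfl, hdw⟩
        have h2 : (f : W → ℂ) w = 0 := by
          rw [transport _ hcls w (rep ⟨_, hmem⟩) (hrep ⟨_, hmem⟩).1.symm]
          exact hf0 ⟨_, hmem⟩
        rw [h2, map_zero, zero_mul, zero_mul]
  have hsurj : Function.Surjective φ := by
    intro h
    set f : W → ℂ := fun w =>
      if hw : ConjClasses.mk w ∈ E then h ⟨_, hw⟩ else 0 with hfdef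
    have hfCF : f ∈ CF := by
      rw [← SetLike.mem_coe, hCF]
      intro x w
      have hmk : ConjClasses.mk (x * w * x⁻¹) = ConjClasses.mk w :=
        ConjClasses.mk_eq_mk_iff_isConj.mpr (isConj_iff.mpr ⟨x⁻¹, by group⟩)
      simp only [hfdef, hmk]
    refine ⟨⟨f, hfCF⟩, ?_⟩
    funext c
    show f (rep c) = h c
    have h1 : ConjClasses.mk (rep c) ∈ E := (hrep c).1 ▸ c.2
    simp only [hfdef, dif_pos h1]
    exact congrArg h (Subtype.ext (hrep c).1)
  haveI : Fintype (ConjClasses W) := Fintype.ofFinite _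
  haveI : Fintype E := Fintype.ofFinite _
  rw [hker]
  have e1 := (LinearMap.quotKerEquivRange φ).finrank_eq
  rw [LinearMap.range_eq_top.mpr hsurj] at e1
  rw [e1, finrank_top]
  rw [Set.ncard_eq_toFinset_card', Set.toFinset_card]
  exact Module.finrank_fintype_fun_eq_card ℂ
end
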